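/- arXiv:2312.02671 — 2 statements merged into one kernel-verified Lean document; each statement's English description precedes it below -/
import Mathlib

section
/- Let ρ^ε be a Borel probability measure on 𝒳 with finite second moment, absolutely continuous with respect to ρ, with ‖1 − dρ^ε/dρ‖_{L^∞(ρ)} ≤ ε for some 0 < ε < 1, and let f ∈ L²(ρ) ∩ L²(ρ^ε). Let μ† ∈ M(Ω) satisfy L_ρ(f − Kμ†) = 0 on Ω. Then for every ν ∈ M(Ω), the quantity ∫_Ω L_{ρ^ε}(f − Kν) d(ν − μ†) is strictly negative whenever ‖f − Kν‖_{L²(ρ)} > ((1+ε)/(1−ε)) ‖f − Kμ†‖_{L²(ρ)}. -/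
open MeasureTheory RealInnerProductSpace

noncomputable section

/-- Integral of a real function against a signed measure, via the Jordan decomposition. -/
def sInt {α : Type*} [MeasurableSpace α] (μ : SignedMeasure α) (g : α → ℝ) : ℝ :=
  (∫ w, g w ∂μ.toJordanDecomposition.posPart) - ∫ w, g w ∂μ.toJordanDecomposition.negPart

/-- Total variation norm of a signed measure. -/
def tvNorm {α : Type*} [MeasurableSpace α] (μ : SignedMeasure α) : ℝ :=
  (μ.totalVariation Set.univ).toReal

/-- Input space ℝ^d. -/
abbrev Ed (d : ℕ) := EuclideanSpace ℝ (Fin d)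

/-- Parameter space ℝ^d × ℝ. -/
abbrev Pd (d : ℕ) := EuclideanSpace ℝ (Fin d) × ℝ

/-- The weight V(a,b) = 1 + ‖a‖ + |b|. -/
def Vw {d : ℕ} (w : Pd d) : ℝ := 1 + ‖w.1‖ + |w.2|

/-- The Barron-norm functional J(μ) = ∫ V d|μ|. -/
def Jfun {d : ℕ} {Ω : Set (Pd d)} (μ : SignedMeasure ↥Ω) : ℝ :=
  ∫ w, Vw (w : Pd d) ∂μ.totalVariation

/-- (Kμ)(x) = ∫_Ω σ(aᵀx + b) dμ(a,b). -/
def Kop {d : ℕ} (σ : ℝ → ℝ) {Ω : Set (Pd d)} (μ : SignedMeasure ↥Ω) (x : Ed d) : ℝ :=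
  sInt μ (fun w => σ (⟪(w : Pd d).1, x⟫ + (w : Pd d).2))

/-- (L_ρ φ)(a,b) = ∫ φ(x) σ(aᵀx + b) dρ(x). -/
def Lop {d : ℕ} (σ : ℝ → ℝ) (ρ : Measure (Ed d)) (φ : Ed d → ℝ) (w : Pd d) : ℝ :=
  ∫ x, φ x * σ (⟪w.1, x⟫ + w.2) ∂ρ

/-- Squared L²(ρ) norm. -/
def L2sq {d : ℕ} (ρ : Measure (Ed d)) (g : Ed d → ℝ) : ℝ := ∫ x, g x ^ 2 ∂ρ

/-- L²(ρ) norm. -/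
def L2norm {d : ℕ} (ρ : Measure (Ed d)) (g : Ed d → ℝ) : ℝ := Real.sqrt (L2sq ρ g)

/-- The loss R_f(μ) = ½‖Kμ − f‖²_{L²(ρ)}. -/
def Rf {d : ℕ} (σ : ℝ → ℝ) {Ω : Set (Pd d)} (ρ : Measure (Ed d)) (f : Ed d → ℝ)
    (μ : SignedMeasure ↥Ω) : ℝ := (1 / 2) * L2sq ρ (fun x => Kop σ μ x - f x)

/-- Bregman divergence D_J^p(μ, ν) = J(μ) − J(ν) − ∫ p d(μ − ν). -/
def DJ {d : ℕ} {Ω : Set (Pd d)} (p : Pd d → ℝ) (μ ν : SignedMeasure ↥Ω) : ℝ :=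
  Jfun μ - Jfun ν - sInt (μ - ν) (fun w => p (w : Pd d))


section Aux
variable {α : Type*} [MeasurableSpace α]

lemma integrable_of_bdd {P : Measure α} [IsFiniteMeasure P] {g : α → ℝ}
    (hm : AEStronglyMeasurable g P) {C : ℝ} (h : ∀ a, |g a| ≤ C) : Integrable g P :=
  (integrable_const C).mono' hm (Filter.Eventually.of_forall fun a => by
    simpa [Real.norm_eq_abs] using h a)

lemma jordan_self (s : SignedMeasure α) :
    s = s.toJordanDecomposition.posPart.toSignedMeasure
      - s.toJordanDecomposition.negPart.toSignedMeasure := by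
  conv_lhs => rw [← s.toSignedMeasure_toJordanDecomposition]
  rfl

lemma jordan_add_eq {s : SignedMeasure α} {P Q : Measure α} [IsFiniteMeasure P] [IsFiniteMeasure Q]
    (h : s = P.toSignedMeasure - Q.toSignedMeasure) :
    s.toJordanDecomposition.posPart + Q = s.toJordanDecomposition.negPart + P := by
  ext i hi
  have h2 := (jordan_self s).symm.trans h
  have h3 := congrArg (fun t : SignedMeasure α => t i) h2
  simp only [VectorMeasure.sub_apply, Measure.toSignedMeasure_apply_measurable hi] at h3
  have h4 : ((s.toJordanDecomposition.posPart + Q) i).toReal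
      = ((s.toJordanDecomposition.negPart + P) i).toReal := by
    rw [Measure.add_apply, Measure.add_apply,
      ENNReal.toReal_add (measure_ne_top _ _) (measure_ne_top _ _),
      ENNReal.toReal_add (measure_ne_top _ _) (measure_ne_top _ _)]
    simp only [measureReal_def] at h3
    linarith
  exact (ENNReal.toReal_eq_toReal_iff' (measure_ne_top _ _) (measure_ne_top _ _)).mp h4

lemma sInt_eq_of_decomp {s : SignedMeasure α} {P Q : Measure α}
    [IsFiniteMeasure P] [IsFiniteMeasure Q]
    (h : s = P.toSignedMeasure - Q.toSignedMeasure) {g : α → ℝ}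
    (hg : StronglyMeasurable g) {C : ℝ} (hb : ∀ a, |g a| ≤ C) :
    sInt s g = (∫ a, g a ∂P) - ∫ a, g a ∂Q := by
  have h1 : Integrable g s.toJordanDecomposition.posPart :=
    integrable_of_bdd hg.aestronglyMeasurable hb
  have h2 : Integrable g s.toJordanDecomposition.negPart :=
    integrable_of_bdd hg.aestronglyMeasurable hb
  have hP : Integrable g P := integrable_of_bdd hg.aestronglyMeasurable hb
  have hQ : Integrable g Q := integrable_of_bdd hg.aestronglyMeasurable hb
  have h5 : (∫ a, g a ∂s.toJordanDecomposition.posPart) + ∫ a, g a ∂Q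
      = (∫ a, g a ∂s.toJordanDecomposition.negPart) + ∫ a, g a ∂P := by
    rw [← integral_add_measure h1 hQ, ← integral_add_measure h2 hP, jordan_add_eq h]
  unfold sInt; linarith

lemma sInt_sub (ν μ : SignedMeasure α) {g : α → ℝ} (hg : StronglyMeasurable g)
    {C : ℝ} (hb : ∀ a, |g a| ≤ C) :
    sInt (ν - μ) g = sInt ν g - sInt μ g := by
  have hdec : ν - μ
      = (ν.toJordanDecomposition.posPart + μ.toJordanDecomposition.negPart).toSignedMeasure
      - (ν.toJordanDecomposition.negPart + μ.toJordanDecomposition.posPart).toSignedMeasure := by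
    rw [Measure.toSignedMeasure_add, Measure.toSignedMeasure_add]
    conv_lhs => rw [jordan_self ν, jordan_self μ]
    abel
  have h1 : Integrable g ν.toJordanDecomposition.posPart :=
    integrable_of_bdd hg.aestronglyMeasurable hb
  have h2 : Integrable g ν.toJordanDecomposition.negPart :=
    integrable_of_bdd hg.aestronglyMeasurable hb
  have h3 : Integrable g μ.toJordanDecomposition.posPart :=
    integrable_of_bdd hg.aestronglyMeasurable hb
  have h4 : Integrable g μ.toJordanDecomposition.negPart :=
    integrable_of_bdd hg.aestronglyMeasurable hb
  rw [sInt_eq_of_decomp hdec hg hb, integral_add_measure h1 h4, integral_add_measure h2 h3]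
  unfold sInt; ring

lemma integrable_mul_of_memL2 {μ : Measure α} {u v : α → ℝ}
    (hu : MemLp u 2 μ) (hv : MemLp v 2 μ) : Integrable (fun x => u x * v x) μ := by
  refine Integrable.mono' ((hu.integrable_sq.add hv.integrable_sq).const_mul (1/2))
    (hu.aestronglyMeasurable.mul hv.aestronglyMeasurable)
    (Filter.Eventually.of_forall fun x => ?_)
  simp only [Real.norm_eq_abs, abs_mul, Pi.add_apply]
  nlinarith [sq_nonneg (|u x| - |v x|), sq_abs (u x), sq_abs (v x), abs_nonneg (u x),
    abs_nonneg (v x)]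

end Aux

section Dom
variable {d : ℕ} {Ω : Set (Pd d)} {σ : ℝ → ℝ} {Lσ : NNReal}

/-- auxiliary: integral of the neuron against a (positive) measure on Ω. -/
def auxK (σ : ℝ → ℝ) {d : ℕ} {Ω : Set (Pd d)} (P : Measure ↥Ω) (x : Ed d) : ℝ :=
  ∫ w, σ (⟪(w : Pd d).1, x⟫ + (w : Pd d).2) ∂P

lemma sigma_abs_le (hσ : LipschitzWith Lσ σ) (y : ℝ) : |σ y| ≤ |σ 0| + Lσ * |y| := by
  have h := hσ.dist_le_mul y 0
  rw [Real.dist_eq, Real.dist_eq, sub_zero] at h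
  have : |σ y| ≤ |σ y - σ 0| + |σ 0| := by
    have := abs_add_le (σ y - σ 0) (σ 0); simpa using this
  linarith

variable {R : ℝ}

lemma gW_bound (hσ : LipschitzWith Lσ σ) (hR0 : 0 ≤ R) (hR : ∀ w ∈ Ω, ‖w‖ ≤ R)
    (x : Ed d) (w : ↥Ω) :
    |σ (⟪(w : Pd d).1, x⟫ + (w : Pd d).2)| ≤ (|σ 0| + Lσ * R) + Lσ * R * ‖x‖ := by
  have h1 : ‖(w : Pd d).1‖ ≤ R := le_trans (norm_fst_le (w : Pd d)) (hR w w.2)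
  have h2 : |(w : Pd d).2| ≤ R := le_trans (norm_snd_le (w : Pd d)) (hR w w.2)
  have h3 : |⟪(w : Pd d).1, x⟫| ≤ ‖(w : Pd d).1‖ * ‖x‖ := abs_real_inner_le_norm _ _
  have h4 := sigma_abs_le hσ (⟪(w : Pd d).1, x⟫ + (w : Pd d).2)
  have h5 : |⟪(w : Pd d).1, x⟫ + (w : Pd d).2| ≤ R * ‖x‖ + R := by
    have := abs_add_le (⟪(w : Pd d).1, x⟫) ((w : Pd d).2)
    have h6 : ‖(w : Pd d).1‖ * ‖x‖ ≤ R * ‖x‖ :=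
      mul_le_mul_of_nonneg_right h1 (norm_nonneg _)
    linarith
  have hL : (0:ℝ) ≤ Lσ := Lσ.2
  nlinarith [mul_le_mul_of_nonneg_left h5 hL]

lemma gW_cont (hσ : LipschitzWith Lσ σ) (x : Ed d) :
    Continuous (fun w : ↥Ω => σ (⟪(w : Pd d).1, x⟫ + (w : Pd d).2)) :=
  hσ.continuous.comp
    (((continuous_subtype_val.fst).inner continuous_const).add continuous_subtype_val.snd)

variable (P : Measure ↥Ω) [IsFiniteMeasure P]

lemma gW_integrable (hσ : LipschitzWith Lσ σ) (hR0 : 0 ≤ R) (hR : ∀ w ∈ Ω, ‖w‖ ≤ R)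
    (x : Ed d) :
    Integrable (fun w : ↥Ω => σ (⟪(w : Pd d).1, x⟫ + (w : Pd d).2)) P :=
  integrable_of_bdd (gW_cont hσ x).aestronglyMeasurable (gW_bound hσ hR0 hR x)

lemma auxK_bound (hσ : LipschitzWith Lσ σ) (hR0 : 0 ≤ R) (hR : ∀ w ∈ Ω, ‖w‖ ≤ R) (x : Ed d) :
    |auxK σ P x| ≤ (|σ 0| + Lσ * R) * (P Set.univ).toReal
      + (Lσ * R * (P Set.univ).toReal) * ‖x‖ := by
  have h := norm_integral_le_of_norm_le_const (μ := P)
    (f := fun w : ↥Ω => σ (⟪(w : Pd d).1, x⟫ + (w : Pd d).2))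
    (C := (|σ 0| + Lσ * R) + Lσ * R * ‖x‖)
    (Filter.Eventually.of_forall fun w => by
      simpa [Real.norm_eq_abs] using gW_bound hσ hR0 hR x w)
  calc |auxK σ P x| ≤ ((|σ 0| + Lσ * R) + Lσ * R * ‖x‖) * (P Set.univ).toReal := h
    _ = _ := by ring

lemma auxK_lip (hσ : LipschitzWith Lσ σ) (hR0 : 0 ≤ R) (hR : ∀ w ∈ Ω, ‖w‖ ≤ R) (x y : Ed d) :
    |auxK σ P x - auxK σ P y| ≤ (Lσ * R * (P Set.univ).toReal) * ‖x - y‖ := by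
  have hix := gW_integrable P hσ hR0 hR x
  have hiy := gW_integrable P hσ hR0 hR y
  have heq : auxK σ P x - auxK σ P y
      = ∫ w, (σ (⟪(w : Pd d).1, x⟫ + (w : Pd d).2) - σ (⟪(w : Pd d).1, y⟫ + (w : Pd d).2)) ∂P :=
    (integral_sub hix hiy).symm
  rw [heq]
  have h := norm_integral_le_of_norm_le_const (μ := P)
    (f := fun w : ↥Ω =>
      σ (⟪(w : Pd d).1, x⟫ + (w : Pd d).2) - σ (⟪(w : Pd d).1, y⟫ + (w : Pd d).2))
    (C := Lσ * R * ‖x - y‖)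
    (Filter.Eventually.of_forall fun w => by
      have h1 : ‖(w : Pd d).1‖ ≤ R := le_trans (norm_fst_le (w : Pd d)) (hR w w.2)
      have hd := hσ.dist_le_mul (⟪(w : Pd d).1, x⟫ + (w : Pd d).2)
        (⟪(w : Pd d).1, y⟫ + (w : Pd d).2)
      rw [Real.dist_eq, Real.dist_eq] at hd
      have h2 : (⟪(w : Pd d).1, x⟫ + (w : Pd d).2) - (⟪(w : Pd d).1, y⟫ + (w : Pd d).2)
          = ⟪(w : Pd d).1, x - y⟫ := by rw [inner_sub_right]; ring
      rw [h2] at hd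
      have h3 : |⟪(w : Pd d).1, x - y⟫| ≤ ‖(w : Pd d).1‖ * ‖x - y‖ := abs_real_inner_le_norm _ _
      have hL : (0:ℝ) ≤ Lσ := Lσ.2
      have h4 : ‖(w : Pd d).1‖ * ‖x - y‖ ≤ R * ‖x - y‖ :=
        mul_le_mul_of_nonneg_right h1 (norm_nonneg _)
      simp only [Real.norm_eq_abs]
      nlinarith)
  calc ‖∫ w, (σ (⟪(w : Pd d).1, x⟫ + (w : Pd d).2) - σ (⟪(w : Pd d).1, y⟫ + (w : Pd d).2)) ∂P‖
      ≤ (Lσ * R * ‖x - y‖) * (P Set.univ).toReal := h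
    _ = _ := by ring

lemma auxK_cont (hσ : LipschitzWith Lσ σ) (hR0 : 0 ≤ R) (hR : ∀ w ∈ Ω, ‖w‖ ≤ R) :
    Continuous (auxK σ P) := by
  have hc : 0 ≤ (Lσ : ℝ) * R * (P Set.univ).toReal :=
    mul_nonneg (mul_nonneg Lσ.2 hR0) ENNReal.toReal_nonneg
  refine (LipschitzWith.of_dist_le_mul
    (K := ((Lσ : ℝ) * R * (P Set.univ).toReal).toNNReal) fun x y => ?_).continuous
  rw [Real.dist_eq, Real.coe_toNNReal _ hc, dist_eq_norm]
  exact auxK_lip P hσ hR0 hR x y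

lemma auxK_mem (hσ : LipschitzWith Lσ σ) (hR0 : 0 ≤ R) (hR : ∀ w ∈ Ω, ‖w‖ ≤ R)
    (π : Measure (Ed d)) [IsProbabilityMeasure π]
    (h2 : Integrable (fun x : Ed d => ‖x‖ ^ 2) π) : MemLp (auxK σ P) 2 π := by
  have hn : MemLp (fun x : Ed d => ‖x‖) 2 π :=
    (memLp_two_iff_integrable_sq continuous_norm.aestronglyMeasurable).mpr h2
  refine MemLp.of_le ((memLp_const ((|σ 0| + Lσ * R) * (P Set.univ).toReal)).add
      (hn.const_mul (Lσ * R * (P Set.univ).toReal)))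
    (auxK_cont P hσ hR0 hR).aestronglyMeasurable
    (Filter.Eventually.of_forall fun x => ?_)
  simp only [Real.norm_eq_abs, Pi.add_apply]
  exact le_trans (auxK_bound P hσ hR0 hR x) (le_abs_self _)

end Dom

section Dom2
variable {d : ℕ} {Ω : Set (Pd d)} {σ : ℝ → ℝ} {Lσ : NNReal} {R : ℝ}
variable {π : Measure (Ed d)} [IsProbabilityMeasure π] {φ : Ed d → ℝ}

lemma Kop_eq_auxK (s : SignedMeasure ↥Ω) (x : Ed d) :
    Kop σ s x = auxK σ s.toJordanDecomposition.posPart x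
      - auxK σ s.toJordanDecomposition.negPart x := rfl

lemma Kop_sub_apply (hσ : LipschitzWith Lσ σ) (hR0 : 0 ≤ R) (hR : ∀ w ∈ Ω, ‖w‖ ≤ R)
    (ν μ : SignedMeasure ↥Ω) (x : Ed d) :
    Kop σ (ν - μ) x = Kop σ ν x - Kop σ μ x :=
  sInt_sub ν μ ((gW_cont hσ x).stronglyMeasurable) (gW_bound hσ hR0 hR x)

lemma Kop_mem (hσ : LipschitzWith Lσ σ) (hR0 : 0 ≤ R) (hR : ∀ w ∈ Ω, ‖w‖ ≤ R)
    (s : SignedMeasure ↥Ω) (h2 : Integrable (fun x : Ed d => ‖x‖ ^ 2) π) :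
    MemLp (Kop σ s) 2 π := by
  have : Kop σ s = fun x => auxK σ s.toJordanDecomposition.posPart x
      - auxK σ s.toJordanDecomposition.negPart x := rfl
  rw [this]
  exact (auxK_mem _ hσ hR0 hR π h2).sub (auxK_mem _ hσ hR0 hR π h2)

lemma Kop_cont (hσ : LipschitzWith Lσ σ) (hR0 : 0 ≤ R) (hR : ∀ w ∈ Ω, ‖w‖ ≤ R)
    (s : SignedMeasure ↥Ω) : Continuous (Kop σ s) := by
  have : Kop σ s = fun x => auxK σ s.toJordanDecomposition.posPart x
      - auxK σ s.toJordanDecomposition.negPart x := rfl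
  rw [this]
  exact (auxK_cont _ hσ hR0 hR).sub (auxK_cont _ hσ hR0 hR)

lemma hI_of_memL2 (hφ2 : MemLp φ 2 π) (h2 : Integrable (fun x : Ed d => ‖x‖ ^ 2) π) :
    Integrable (fun x => |φ x| * (1 + ‖x‖)) π := by
  have hn : MemLp (fun x : Ed d => ‖x‖) 2 π :=
    (memLp_two_iff_integrable_sq continuous_norm.aestronglyMeasurable).mpr h2
  exact integrable_mul_of_memL2 hφ2.abs ((memLp_const (1:ℝ)).add hn)

lemma lop_integrand_int (hσ : LipschitzWith Lσ σ) (hφm : AEStronglyMeasurable φ π)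
    (hI : Integrable (fun x => |φ x| * (1 + ‖x‖)) π) (w : Pd d) :
    Integrable (fun x => φ x * σ (⟪w.1, x⟫ + w.2)) π := by
  refine Integrable.mono' (hI.const_mul (|σ 0| + Lσ * ‖w.1‖ + Lσ * |w.2|))
    (hφm.mul ((hσ.continuous.comp
      ((continuous_const.inner continuous_id).add continuous_const)).aestronglyMeasurable))
    (Filter.Eventually.of_forall fun x => ?_)
  have h1 : |⟪w.1, x⟫| ≤ ‖w.1‖ * ‖x‖ := abs_real_inner_le_norm _ _
  have h2 := sigma_abs_le hσ (⟪w.1, x⟫ + w.2)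
  have h3 := abs_add_le (⟪w.1, x⟫) w.2
  have hL : (0:ℝ) ≤ Lσ := Lσ.2
  simp only [Real.norm_eq_abs, abs_mul]
  have h4 : |σ (⟪w.1, x⟫ + w.2)| ≤ (|σ 0| + Lσ * ‖w.1‖ + Lσ * |w.2|) * (1 + ‖x‖) := by
    nlinarith [norm_nonneg w.1, norm_nonneg x, abs_nonneg w.2, abs_nonneg (σ 0),
      mul_nonneg (abs_nonneg (σ 0)) (norm_nonneg x),
      mul_le_mul_of_nonneg_left h1 hL, mul_le_mul_of_nonneg_left h3 hL,
      mul_nonneg (mul_nonneg hL (abs_nonneg w.2)) (norm_nonneg x),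
      mul_nonneg (mul_nonneg hL (norm_nonneg w.1)) (norm_nonneg x)]
  calc |φ x| * |σ (⟪w.1, x⟫ + w.2)|
      ≤ |φ x| * ((|σ 0| + Lσ * ‖w.1‖ + Lσ * |w.2|) * (1 + ‖x‖)) :=
        mul_le_mul_of_nonneg_left h4 (abs_nonneg _)
    _ = (|σ 0| + Lσ * ‖w.1‖ + Lσ * |w.2|) * (|φ x| * (1 + ‖x‖)) := by ring

lemma Lop_cont (hσ : LipschitzWith Lσ σ) (hφm : AEStronglyMeasurable φ π)
    (hI : Integrable (fun x => |φ x| * (1 + ‖x‖)) π) : Continuous (Lop σ π φ) := by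
  set I := ∫ x, |φ x| * (1 + ‖x‖) ∂π with hIdef
  have hI0 : 0 ≤ I := integral_nonneg fun x => by positivity
  have hL : (0:ℝ) ≤ Lσ := Lσ.2
  refine (LipschitzWith.of_dist_le_mul (K := ((Lσ : ℝ) * I).toNNReal) fun w w' => ?_).continuous
  rw [Real.dist_eq, Real.coe_toNNReal _ (mul_nonneg hL hI0)]
  have hint := lop_integrand_int hσ hφm hI w
  have hint' := lop_integrand_int hσ hφm hI w'
  have heq : Lop σ π φ w - Lop σ π φ w'
      = ∫ x, (φ x * σ (⟪w.1, x⟫ + w.2) - φ x * σ (⟪w'.1, x⟫ + w'.2)) ∂π :=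
    (integral_sub hint hint').symm
  rw [heq]
  have hptw : ∀ x, ‖φ x * σ (⟪w.1, x⟫ + w.2) - φ x * σ (⟪w'.1, x⟫ + w'.2)‖
      ≤ ((Lσ : ℝ) * dist w w') * (|φ x| * (1 + ‖x‖)) := by
    intro x
    have hd := hσ.dist_le_mul (⟪w.1, x⟫ + w.2) (⟪w'.1, x⟫ + w'.2)
    rw [Real.dist_eq, Real.dist_eq] at hd
    have h2 : (⟪w.1, x⟫ + w.2) - (⟪w'.1, x⟫ + w'.2) = ⟪w.1 - w'.1, x⟫ + (w.2 - w'.2) := by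
      rw [inner_sub_left]; ring
    rw [h2] at hd
    have h3 : |⟪w.1 - w'.1, x⟫| ≤ ‖w.1 - w'.1‖ * ‖x‖ := abs_real_inner_le_norm _ _
    have h4 : ‖w.1 - w'.1‖ ≤ dist w w' := by
      rw [← dist_eq_norm]; rw [Prod.dist_eq]; exact le_max_left _ _
    have h5 : |w.2 - w'.2| ≤ dist w w' := by
      rw [← Real.dist_eq]; rw [Prod.dist_eq]; exact le_max_right _ _
    have h6 := abs_add_le (⟪w.1 - w'.1, x⟫) (w.2 - w'.2)
    have hL : (0:ℝ) ≤ Lσ := Lσ.2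
    have h7 : |⟪w.1 - w'.1, x⟫ + (w.2 - w'.2)| ≤ dist w w' * ‖x‖ + dist w w' := by
      nlinarith [norm_nonneg x, dist_nonneg (x := w) (y := w'),
        mul_le_mul_of_nonneg_right h4 (norm_nonneg x)]
    calc ‖φ x * σ (⟪w.1, x⟫ + w.2) - φ x * σ (⟪w'.1, x⟫ + w'.2)‖
        = |φ x| * |σ (⟪w.1, x⟫ + w.2) - σ (⟪w'.1, x⟫ + w'.2)| := by
          rw [← mul_sub, Real.norm_eq_abs, abs_mul]
      _ ≤ |φ x| * ((Lσ : ℝ) * (dist w w' * ‖x‖ + dist w w')) := by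
          refine mul_le_mul_of_nonneg_left (le_trans hd ?_) (abs_nonneg _)
          exact mul_le_mul_of_nonneg_left h7 hL
      _ ≤ ((Lσ : ℝ) * dist w w') * (|φ x| * (1 + ‖x‖)) := by
          nlinarith [abs_nonneg (φ x), norm_nonneg x, dist_nonneg (x := w) (y := w')]
  calc |∫ x, (φ x * σ (⟪w.1, x⟫ + w.2) - φ x * σ (⟪w'.1, x⟫ + w'.2)) ∂π|
      ≤ ∫ x, ‖φ x * σ (⟪w.1, x⟫ + w.2) - φ x * σ (⟪w'.1, x⟫ + w'.2)‖ ∂π := by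
        rw [← Real.norm_eq_abs]; exact norm_integral_le_integral_norm _
    _ ≤ ∫ x, ((Lσ : ℝ) * dist w w') * (|φ x| * (1 + ‖x‖)) ∂π := by
        refine integral_mono ((hint.sub hint').norm) (hI.const_mul _) fun x => hptw x
    _ = ((Lσ : ℝ) * dist w w') * I := by rw [integral_const_mul]
    _ = (Lσ : ℝ) * I * dist w w' := by ring

end Dom2

section Dom3
variable {d : ℕ} {Ω : Set (Pd d)} {σ : ℝ → ℝ} {Lσ : NNReal} {R : ℝ}
variable {π : Measure (Ed d)} [IsProbabilityMeasure π] {φ : Ed d → ℝ}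

lemma Lop_bdd_on (hσ : LipschitzWith Lσ σ) (hR0 : 0 ≤ R) (hR : ∀ w ∈ Ω, ‖w‖ ≤ R)
    (hφm : AEStronglyMeasurable φ π) (hI : Integrable (fun x => |φ x| * (1 + ‖x‖)) π)
    (w : ↥Ω) :
    |Lop σ π φ (w : Pd d)| ≤ (|σ 0| + Lσ * R) * ∫ x, |φ x| * (1 + ‖x‖) ∂π := by
  have hL : (0:ℝ) ≤ Lσ := Lσ.2
  have hint := lop_integrand_int hσ hφm hI (w : Pd d)
  have hptw : ∀ x, ‖φ x * σ (⟪(w : Pd d).1, x⟫ + (w : Pd d).2)‖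
      ≤ (|σ 0| + Lσ * R) * (|φ x| * (1 + ‖x‖)) := by
    intro x
    have hb := gW_bound hσ hR0 hR x w
    have h0 : (0:ℝ) ≤ |σ 0| + Lσ * R := by positivity
    have : |σ (⟪(w : Pd d).1, x⟫ + (w : Pd d).2)| ≤ (|σ 0| + Lσ * R) * (1 + ‖x‖) := by
      nlinarith [norm_nonneg x, mul_nonneg (mul_nonneg hL hR0) (norm_nonneg x),
        mul_nonneg (abs_nonneg (σ 0)) (norm_nonneg x)]
    calc ‖φ x * σ (⟪(w : Pd d).1, x⟫ + (w : Pd d).2)‖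
        = |φ x| * |σ (⟪(w : Pd d).1, x⟫ + (w : Pd d).2)| := by
          rw [Real.norm_eq_abs, abs_mul]
      _ ≤ |φ x| * ((|σ 0| + Lσ * R) * (1 + ‖x‖)) :=
          mul_le_mul_of_nonneg_left this (abs_nonneg _)
      _ = (|σ 0| + Lσ * R) * (|φ x| * (1 + ‖x‖)) := by ring
  calc |Lop σ π φ (w : Pd d)|
      ≤ ∫ x, ‖φ x * σ (⟪(w : Pd d).1, x⟫ + (w : Pd d).2)‖ ∂π := by
        rw [← Real.norm_eq_abs]; exact norm_integral_le_integral_norm _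
    _ ≤ ∫ x, (|σ 0| + Lσ * R) * (|φ x| * (1 + ‖x‖)) ∂π :=
        integral_mono hint.norm (hI.const_mul _) hptw
    _ = (|σ 0| + Lσ * R) * ∫ x, |φ x| * (1 + ‖x‖) ∂π := integral_const_mul _ _

lemma Lop_integrable_on (hσ : LipschitzWith Lσ σ) (hR0 : 0 ≤ R) (hR : ∀ w ∈ Ω, ‖w‖ ≤ R)
    (hφm : AEStronglyMeasurable φ π) (hI : Integrable (fun x => |φ x| * (1 + ‖x‖)) π)
    (P : Measure ↥Ω) [IsFiniteMeasure P] :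
    Integrable (fun w : ↥Ω => Lop σ π φ (w : Pd d)) P :=
  integrable_of_bdd ((Lop_cont hσ hφm hI).comp continuous_subtype_val).aestronglyMeasurable
    (Lop_bdd_on hσ hR0 hR hφm hI)

lemma fubini_meas (hσ : LipschitzWith Lσ σ) (hR0 : 0 ≤ R) (hR : ∀ w ∈ Ω, ‖w‖ ≤ R)
    (hφm : Measurable φ) (hφ2 : MemLp φ 2 π)
    (h2 : Integrable (fun x : Ed d => ‖x‖ ^ 2) π)
    (P : Measure ↥Ω) [IsFiniteMeasure P] :
    ∫ w : ↥Ω, Lop σ π φ (w : Pd d) ∂P = ∫ x, φ x * auxK σ P x ∂π := by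
  have hL : (0:ℝ) ≤ Lσ := Lσ.2
  have hn : MemLp (fun x : Ed d => ‖x‖) 2 π :=
    (memLp_two_iff_integrable_sq continuous_norm.aestronglyMeasurable).mpr h2
  set B : Ed d → ℝ := fun x => |φ x| * ((|σ 0| + Lσ * R) + Lσ * R * ‖x‖) with hBdef
  have hB : Integrable B π :=
    integrable_mul_of_memL2 hφ2.abs
      ((memLp_const ((|σ 0| + Lσ * R))).add (hn.const_mul (Lσ * R)))
  have hc : Continuous fun p : ↥Ω × Ed d =>
      ⟪((p.1 : Pd d)).1, p.2⟫ + ((p.1 : Pd d)).2 :=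
    (((continuous_subtype_val.comp continuous_fst).fst).inner continuous_snd).add
      ((continuous_subtype_val.comp continuous_fst).snd)
  have hFm : Measurable fun p : ↥Ω × Ed d =>
      φ p.2 * σ (⟪((p.1 : Pd d)).1, p.2⟫ + ((p.1 : Pd d)).2) :=
    (hφm.comp measurable_snd).mul ((hσ.continuous.comp hc).measurable)
  have hptw : ∀ (w : ↥Ω) (x : Ed d),
      ‖φ x * σ (⟪(w : Pd d).1, x⟫ + (w : Pd d).2)‖ ≤ B x := by
    intro w x
    rw [Real.norm_eq_abs, abs_mul]
    exact mul_le_mul_of_nonneg_left (gW_bound hσ hR0 hR x w) (abs_nonneg _)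
  have hslice : ∀ w : ↥Ω,
      Integrable (fun x => φ x * σ (⟪(w : Pd d).1, x⟫ + (w : Pd d).2)) π := by
    intro w
    refine Integrable.mono' hB
      (hφm.aestronglyMeasurable.mul
        ((hσ.continuous.comp ((continuous_const.inner continuous_id).add
          continuous_const)).aestronglyMeasurable))
      (Filter.Eventually.of_forall fun x => hptw w x)
  have hFint : Integrable
      (fun p : ↥Ω × Ed d => φ p.2 * σ (⟪((p.1 : Pd d)).1, p.2⟫ + ((p.1 : Pd d)).2))
      (P.prod π) := by
    rw [integrable_prod_iff hFm.aestronglyMeasurable]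
    constructor
    · exact Filter.Eventually.of_forall fun w => hslice w
    · refine integrable_of_bdd ?_ (C := ∫ x, B x ∂π) ?_
      · exact (hFm.norm.stronglyMeasurable.integral_prod_right').aestronglyMeasurable
      · intro w
        rw [abs_of_nonneg (integral_nonneg fun x => norm_nonneg _)]
        exact integral_mono (hslice w).norm hB fun x => hptw w x
  have hswap := integral_integral_swap
    (f := fun (w : ↥Ω) (x : Ed d) => φ x * σ (⟪(w : Pd d).1, x⟫ + (w : Pd d).2)) hFint
  calc ∫ w : ↥Ω, Lop σ π φ (w : Pd d) ∂P
      = ∫ w : ↥Ω, ∫ x, φ x * σ (⟪(w : Pd d).1, x⟫ + (w : Pd d).2) ∂π ∂P := rfl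
    _ = ∫ x, ∫ w : ↥Ω, φ x * σ (⟪(w : Pd d).1, x⟫ + (w : Pd d).2) ∂P ∂π := hswap
    _ = ∫ x, φ x * auxK σ P x ∂π := by
        refine integral_congr_ae (Filter.Eventually.of_forall fun x => ?_)
        exact integral_const_mul _ _

lemma fubini_signed (hσ : LipschitzWith Lσ σ) (hR0 : 0 ≤ R) (hR : ∀ w ∈ Ω, ‖w‖ ≤ R)
    (hφm : Measurable φ) (hφ2 : MemLp φ 2 π)
    (h2 : Integrable (fun x : Ed d => ‖x‖ ^ 2) π)
    (s : SignedMeasure ↥Ω) :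
    sInt s (fun w => Lop σ π φ (w : Pd d)) = ∫ x, φ x * Kop σ s x ∂π := by
  have h1 := fubini_meas hσ hR0 hR hφm hφ2 h2 s.toJordanDecomposition.posPart
  have h2' := fubini_meas hσ hR0 hR hφm hφ2 h2 s.toJordanDecomposition.negPart
  have hi1 : Integrable (fun x => φ x * auxK σ s.toJordanDecomposition.posPart x) π :=
    integrable_mul_of_memL2 hφ2 (auxK_mem _ hσ hR0 hR π h2)
  have hi2 : Integrable (fun x => φ x * auxK σ s.toJordanDecomposition.negPart x) π :=
    integrable_mul_of_memL2 hφ2 (auxK_mem _ hσ hR0 hR π h2)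
  unfold sInt
  rw [h1, h2', ← integral_sub hi1 hi2]
  refine integral_congr_ae (Filter.Eventually.of_forall fun x => ?_)
  simp only [Kop_eq_auxK, mul_sub]

end Dom3

/-- If ρ^ε ≪ ρ with ‖1 − dρ^ε/dρ‖_{L^∞(ρ)} ≤ ε, 0 < ε < 1, and μ† satisfies
the orthogonality condition for ρ, then for every ν the quantity
∫_Ω L_{ρ^ε}(f − Kν) d(ν − μ†) is strictly negative whenever
‖f − Kν‖_{L²(ρ)} > ((1+ε)/(1−ε))‖f − Kμ†‖_{L²(ρ)}. -/
theorem radon_nikodym_strict_descent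
    {d : ℕ} (Ω : Set (Pd d)) (hΩ : IsCompact Ω)
    (ρ : Measure (Ed d)) [IsProbabilityMeasure ρ]
    (hρ2 : Integrable (fun x : Ed d => ‖x‖ ^ 2) ρ)
    (ρε : Measure (Ed d)) [IsProbabilityMeasure ρε]
    (hρε2 : Integrable (fun x : Ed d => ‖x‖ ^ 2) ρε)
    (hac : ρε ≪ ρ) (ε : ℝ) (hε : 0 < ε) (hε1 : ε < 1)
    (hdens : ∀ᵐ x ∂ρ, |1 - (ρε.rnDeriv ρ x).toReal| ≤ ε)
    (σ : ℝ → ℝ) (Lσ : NNReal) (hσ : LipschitzWith Lσ σ)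
    (f : Ed d → ℝ) (hfm : Measurable f) (hf2 : MemLp f 2 ρ) (hf2' : MemLp f 2 ρε)
    (μdag : SignedMeasure ↥Ω)
    (horth : ∀ w ∈ Ω, Lop σ ρ (fun x => f x - Kop σ μdag x) w = 0) :
    ∀ ν : SignedMeasure ↥Ω,
      (1 + ε) / (1 - ε) * L2norm ρ (fun x => f x - Kop σ μdag x) <
          L2norm ρ (fun x => f x - Kop σ ν x) →
        sInt (ν - μdag) (fun w => Lop σ ρε (fun x => f x - Kop σ ν x) (w : Pd d)) < 0 := by
  intro ν hlt
  obtain ⟨R₀, hR₀⟩ := hΩ.isBounded.exists_norm_le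
  set R : ℝ := max R₀ 0 with hRdef
  have hR0 : (0:ℝ) ≤ R := le_max_right _ _
  have hR : ∀ w ∈ Ω, ‖w‖ ≤ R := fun w hw => (hR₀ w hw).trans (le_max_left _ _)
  set r : Ed d → ℝ := fun x => f x - Kop σ ν x with hrdef
  set q : Ed d → ℝ := fun x => f x - Kop σ μdag x with hqdef
  have hrm : Measurable r := hfm.sub (Kop_cont hσ hR0 hR ν).measurable
  have hqm : Measurable q := hfm.sub (Kop_cont hσ hR0 hR μdag).measurable
  have hr2 : MemLp r 2 ρ := hf2.sub (Kop_mem hσ hR0 hR ν hρ2)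
  have hq2 : MemLp q 2 ρ := hf2.sub (Kop_mem hσ hR0 hR μdag hρ2)
  have hr2' : MemLp r 2 ρε := hf2'.sub (Kop_mem hσ hR0 hR ν hρε2)
  have hq2' : MemLp q 2 ρε := hf2'.sub (Kop_mem hσ hR0 hR μdag hρε2)
  have hKsub : ∀ x, Kop σ (ν - μdag) x = q x - r x := by
    intro x
    rw [Kop_sub_apply hσ hR0 hR]
    simp only [hrdef, hqdef]
    ring
  -- the target quantity as an integral against ρε
  have hIrq' : Integrable (fun x => r x * q x) ρε := integrable_mul_of_memL2 hr2' hq2'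
  have hIrr' : Integrable (fun x => r x ^ 2) ρε := hr2'.integrable_sq
  have hmain : sInt (ν - μdag) (fun w => Lop σ ρε r (w : Pd d))
      = (∫ x, r x * q x ∂ρε) - ∫ x, r x ^ 2 ∂ρε := by
    rw [fubini_signed hσ hR0 hR hrm hr2' hρε2 (ν - μdag)]
    rw [show (fun x => r x * Kop σ (ν - μdag) x) = fun x => r x * q x - r x ^ 2 by
      funext x; rw [hKsub x]; ring]
    exact integral_sub hIrq' hIrr'
  -- orthogonality
  have hIqq : Integrable (fun x => q x ^ 2) ρ := hq2.integrable_sq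
  have hIqr : Integrable (fun x => q x * r x) ρ := integrable_mul_of_memL2 hq2 hr2
  have hIrq : Integrable (fun x => r x * q x) ρ := integrable_mul_of_memL2 hr2 hq2
  have hIrr : Integrable (fun x => r x ^ 2) ρ := hr2.integrable_sq
  have horth0 : ∫ x, r x * q x ∂ρ = ∫ x, q x ^ 2 ∂ρ := by
    have h := fubini_signed hσ hR0 hR hqm hq2 hρ2 (ν - μdag)
    have hz : (fun w : ↥Ω => Lop σ ρ q (w : Pd d)) = fun _ => (0:ℝ) :=
      funext fun w => horth w w.2
    rw [hz] at h
    simp only [sInt, integral_const, smul_eq_mul, mul_zero, sub_zero, sub_self] at h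
    have h2 : (0:ℝ) = ∫ x, (q x ^ 2 - q x * r x) ∂ρ := by
      rw [h]
      refine integral_congr_ae (Filter.Eventually.of_forall fun x => ?_)
      simp only
      rw [hKsub x]; ring
    rw [integral_sub hIqq hIqr] at h2
    have h3 : ∫ x, r x * q x ∂ρ = ∫ x, q x * r x ∂ρ := by
      refine integral_congr_ae (Filter.Eventually.of_forall fun x => ?_); ring
    linarith
  -- change of measure
  set D : Ed d → ℝ := fun x => (ρε.rnDeriv ρ x).toReal with hDdef
  have hDm : Measurable D := (Measure.measurable_rnDeriv ρε ρ).ennreal_toReal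
  have hD0 : ∀ x, 0 ≤ D x := fun x => ENNReal.toReal_nonneg
  have hch : ∀ g : Ed d → ℝ, ∫ x, g x ∂ρε = ∫ x, D x * g x ∂ρ := by
    intro g
    haveI : ρε.HaveLebesgueDecomposition ρ := Measure.haveLebesgueDecomposition_of_finiteMeasure
    rw [← MeasureTheory.integral_rnDeriv_smul hac (f := g)]
    simp [smul_eq_mul, hDdef]
  -- integrability of the density-weighted integrands
  have hIDrq : Integrable (fun x => D x * (r x * q x)) ρ := by
    refine Integrable.mono' ((hIrq.abs.const_mul (1 + ε)))
      ((hDm.mul (hrm.mul hqm)).aestronglyMeasurable) ?_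
    filter_upwards [hdens] with x hx
    have h1 : D x ≤ 1 + ε := by
      have := abs_le.mp hx; linarith [this.1]
    rw [Real.norm_eq_abs, abs_mul, abs_of_nonneg (hD0 x)]
    exact mul_le_mul_of_nonneg_right h1 (abs_nonneg _)
  have hIDrr : Integrable (fun x => D x * (r x ^ 2)) ρ := by
    refine Integrable.mono' ((hIrr.abs.const_mul (1 + ε)))
      ((hDm.mul (hrm.pow_const 2)).aestronglyMeasurable) ?_
    filter_upwards [hdens] with x hx
    have h1 : D x ≤ 1 + ε := by
      have := abs_le.mp hx; linarith [this.1]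
    rw [Real.norm_eq_abs, abs_mul, abs_of_nonneg (hD0 x)]
    exact mul_le_mul_of_nonneg_right h1 (abs_nonneg _)
  -- abbreviations
  set t : ℝ := Real.sqrt (∫ x, r x ^ 2 ∂ρ) with htdef
  set s : ℝ := Real.sqrt (∫ x, q x ^ 2 ∂ρ) with hsdef
  have ht2 : t ^ 2 = ∫ x, r x ^ 2 ∂ρ :=
    Real.sq_sqrt (integral_nonneg fun x => sq_nonneg _)
  have hs2 : s ^ 2 = ∫ x, q x ^ 2 ∂ρ :=
    Real.sq_sqrt (integral_nonneg fun x => sq_nonneg _)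
  have hsnn : 0 ≤ s := Real.sqrt_nonneg _
  have htnn : 0 ≤ t := Real.sqrt_nonneg _
  -- Cauchy–Schwarz
  have hCS : ∫ x, |r x * q x| ∂ρ ≤ t * s := by
    have hpq : Real.HolderConjugate 2 2 := Real.HolderConjugate.two_two
    have hr2e : MemLp r (ENNReal.ofReal 2) ρ := by
      rw [show ENNReal.ofReal 2 = 2 by simp [ENNReal.ofReal_ofNat]]; exact hr2
    have hq2e : MemLp q (ENNReal.ofReal 2) ρ := by
      rw [show ENNReal.ofReal 2 = 2 by simp [ENNReal.ofReal_ofNat]]; exact hq2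
    have h := integral_mul_norm_le_Lp_mul_Lq hpq hr2e hq2e
    have hL : ∫ x, |r x * q x| ∂ρ = ∫ x, ‖r x‖ * ‖q x‖ ∂ρ := by
      refine integral_congr_ae (Filter.Eventually.of_forall fun x => ?_)
      simp [Real.norm_eq_abs, abs_mul]
    have hpowr : ∀ x, ‖r x‖ ^ (2:ℝ) = r x ^ 2 := fun x => by
      rw [show (2:ℝ) = ((2:ℕ):ℝ) by norm_num, Real.rpow_natCast, Real.norm_eq_abs, sq_abs]
    have hpowq : ∀ x, ‖q x‖ ^ (2:ℝ) = q x ^ 2 := fun x => by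
      rw [show (2:ℝ) = ((2:ℕ):ℝ) by norm_num, Real.rpow_natCast, Real.norm_eq_abs, sq_abs]
    have hR1 : ∫ x, ‖r x‖ ^ (2:ℝ) ∂ρ = ∫ x, r x ^ 2 ∂ρ :=
      integral_congr_ae (Filter.Eventually.of_forall fun x => hpowr x)
    have hR2 : ∫ x, ‖q x‖ ^ (2:ℝ) ∂ρ = ∫ x, q x ^ 2 ∂ρ :=
      integral_congr_ae (Filter.Eventually.of_forall fun x => hpowq x)
    rw [hL]
    calc ∫ x, ‖r x‖ * ‖q x‖ ∂ρ
        ≤ (∫ x, ‖r x‖ ^ (2:ℝ) ∂ρ) ^ (1/(2:ℝ)) * (∫ x, ‖q x‖ ^ (2:ℝ) ∂ρ) ^ (1/(2:ℝ)) := h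
      _ = t * s := by
          rw [hR1, hR2, htdef, hsdef, Real.sqrt_eq_rpow, Real.sqrt_eq_rpow]
  -- bound I1 from above
  have hI1 : ∫ x, D x * (r x * q x) ∂ρ ≤ s ^ 2 + ε * (t * s) := by
    have step : ∫ x, D x * (r x * q x) ∂ρ
        ≤ ∫ x, (r x * q x + ε * |r x * q x|) ∂ρ := by
      refine integral_mono_ae hIDrq (hIrq.add (hIrq.abs.const_mul ε)) ?_
      filter_upwards [hdens] with x hx
      have h1 : D x ≤ 1 + ε := by have := abs_le.mp hx; linarith [this.1]
      have h2 : 1 - ε ≤ D x := by have := abs_le.mp hx; linarith [this.2]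
      set y := r x * q x
      have h3 : 0 ≤ (1 + ε - D x) * (|y| + y) :=
        mul_nonneg (by linarith) (by linarith [neg_abs_le y])
      have h4 : 0 ≤ (D x - (1 - ε)) * (|y| - y) :=
        mul_nonneg (by linarith) (by linarith [le_abs_self y])
      nlinarith [h3, h4]
    have hsplit : ∫ x, (r x * q x + ε * |r x * q x|) ∂ρ
        = (∫ x, r x * q x ∂ρ) + ε * ∫ x, |r x * q x| ∂ρ := by
      rw [integral_add hIrq (hIrq.abs.const_mul ε), integral_const_mul]
    have hcross : ∫ x, r x * q x ∂ρ = s ^ 2 := by rw [horth0, hs2]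
    have := mul_le_mul_of_nonneg_left hCS (le_of_lt hε)
    linarith
  -- bound I2 from below
  have hI2 : (1 - ε) * t ^ 2 ≤ ∫ x, D x * (r x ^ 2) ∂ρ := by
    have step : ∫ x, (1 - ε) * (r x ^ 2) ∂ρ ≤ ∫ x, D x * (r x ^ 2) ∂ρ := by
      refine integral_mono_ae (hIrr.const_mul (1 - ε)) hIDrr ?_
      filter_upwards [hdens] with x hx
      have h2 : 1 - ε ≤ D x := by have := abs_le.mp hx; linarith [(abs_le.mp hx).2]
      exact mul_le_mul_of_nonneg_right h2 (sq_nonneg _)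
    rw [integral_const_mul] at step
    rw [ht2]
    exact step
  -- put everything together
  rw [hmain, hch (fun x => r x * q x), hch (fun x => r x ^ 2)]
  -- final algebra
  have hlt' : (1 + ε) * s < (1 - ε) * t := by
    have h1ε : (0:ℝ) < 1 - ε := by linarith
    have : (1 + ε) / (1 - ε) * s < t := hlt
    calc (1 + ε) * s = ((1 + ε) / (1 - ε) * s) * (1 - ε) := by field_simp
      _ < t * (1 - ε) := by exact mul_lt_mul_of_pos_right this h1ε
      _ = (1 - ε) * t := by ring
  have htpos : 0 < t := by
    have : 0 ≤ (1 + ε) * s := mul_nonneg (by linarith) hsnn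
    nlinarith
  have hts : s ≤ t := by nlinarith
  have hP1 : 0 < ((1 - ε) * t - (1 + ε) * s) * t := mul_pos (by linarith) htpos
  have hP2 : 0 ≤ s * (t - s) := mul_nonneg hsnn (by linarith)
  nlinarith [hI1, hI2, hP1, hP2]

end
end

section
/- Let {Ω_n^N}_{n=1}^N be a Borel partition of Ω with points ω_n^N = (a_n^N, b_n^N) ∈ Ω_n^N, and for μ† ∈ M(Ω) define μ_N = Σ_{n=1}^N μ†(Ω_n^N) δ_{ω_n^N}. Then ‖Kμ_N − Kμ†‖²_{L²(ρ)} ≤ ‖μ†‖²_{M(Ω)} · (max_{1≤n≤N} diam(Ω_n^N))² · Lip(σ)² · ∫_𝒳 max(1, ‖x‖)² dρ(x), where diam is taken with respect to the metric ‖(a,b) − (a′,b′)‖ = ‖a − a′‖ + |b − b′| on ℝ^d × ℝ. -/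
open MeasureTheory RealInnerProductSpace

noncomputable section

/-- The diameter of a set of parameters with respect to the metric
‖(a,b) − (a′,b′)‖ = ‖a − a′‖ + |b − b′| on ℝ^d × ℝ. -/
def diam1 {d : ℕ} (S : Set (Pd d)) : ℝ :=
  sSup {r : ℝ | ∃ p ∈ S, ∃ q ∈ S, r = ‖p.1 - q.1‖ + |p.2 - q.2|}

namespace Aux

lemma integrable_of_bounded_meas {α : Type*} [MeasurableSpace α] {g : α → ℝ}
    (hg : Measurable g) (C : ℝ) (hC : ∀ w, |g w| ≤ C) (ν : Measure α) [IsFiniteMeasure ν] :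
    Integrable g ν :=
  (integrable_const C).mono' hg.aestronglyMeasurable
    (Filter.Eventually.of_forall fun w => by simpa [Real.norm_eq_abs] using hC w)

lemma jordan_apply {α : Type*} [MeasurableSpace α] (μ : SignedMeasure α) {s : Set α}
    (hs : MeasurableSet s) :
    μ s = (μ.toJordanDecomposition.posPart s).toReal
        - (μ.toJordanDecomposition.negPart s).toReal := by
  conv_lhs => rw [← μ.toSignedMeasure_toJordanDecomposition]
  rw [JordanDecomposition.toSignedMeasure, VectorMeasure.sub_apply,
    Measure.toSignedMeasure_apply_measurable hs, Measure.toSignedMeasure_apply_measurable hs]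
  rfl

lemma sInt_eq_of_eq_sub {α : Type*} [MeasurableSpace α] (μ : SignedMeasure α)
    (ν₁ ν₂ : Measure α) [IsFiniteMeasure ν₁] [IsFiniteMeasure ν₂]
    (h : μ = ν₁.toSignedMeasure - ν₂.toSignedMeasure)
    {g : α → ℝ} (hg : Measurable g) (C : ℝ) (hC : ∀ w, |g w| ≤ C) :
    sInt μ g = ∫ w, g w ∂ν₁ - ∫ w, g w ∂ν₂ := by
  have key : μ.toJordanDecomposition.posPart + ν₂ = ν₁ + μ.toJordanDecomposition.negPart := by
    ext s hs
    have e1 : μ s = (ν₁ s).toReal - (ν₂ s).toReal := by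
      rw [h, VectorMeasure.sub_apply, Measure.toSignedMeasure_apply_measurable hs,
        Measure.toSignedMeasure_apply_measurable hs]
      rfl
    have e2 := jordan_apply μ hs
    have e3 : (μ.toJordanDecomposition.posPart s).toReal + (ν₂ s).toReal
        = (ν₁ s).toReal + (μ.toJordanDecomposition.negPart s).toReal := by
      rw [e1] at e2; linarith
    rw [Measure.add_apply, Measure.add_apply]
    rw [← ENNReal.toReal_add (measure_ne_top _ _) (measure_ne_top _ _),
      ← ENNReal.toReal_add (measure_ne_top _ _) (measure_ne_top _ _)] at e3
    exact (ENNReal.toReal_eq_toReal_iff' (by finiteness) (by finiteness)).mp e3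
  have i1 := integrable_of_bounded_meas hg C hC ν₁
  have i2 := integrable_of_bounded_meas hg C hC ν₂
  have ip := integrable_of_bounded_meas hg C hC μ.toJordanDecomposition.posPart
  have iq := integrable_of_bounded_meas hg C hC μ.toJordanDecomposition.negPart
  have := congrArg (fun m => ∫ w, g w ∂m) key
  simp only [integral_add_measure ip i2, integral_add_measure i1 iq] at this
  unfold sInt; linarith

lemma vm_finset_sum_apply {α ι : Type*} [MeasurableSpace α] (s : Finset ι)
    (μ : ι → SignedMeasure α) (t : Set α) :
    (∑ i ∈ s, μ i) t = ∑ i ∈ s, μ i t := by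
  induction s using Finset.cons_induction with
  | empty => simp
  | cons i s hi ih => rw [Finset.sum_cons, VectorMeasure.add_apply, ih, Finset.sum_cons]

lemma isFiniteMeasure_finset_sum {α ι : Type*} [MeasurableSpace α] (s : Finset ι)
    (μ : ι → Measure α) [∀ i, IsFiniteMeasure (μ i)] : IsFiniteMeasure (∑ i ∈ s, μ i) := by
  constructor
  rw [Measure.finset_sum_apply]
  exact ENNReal.sum_lt_top.mpr fun i _ => measure_lt_top _ _

lemma sInt_discrete {α : Type*} [MeasurableSpace α] [MeasurableSingletonClass α]
    {N : ℕ} (c : Fin N → ℝ) (a : Fin N → α) {g : α → ℝ}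
    (hg : Measurable g) (C : ℝ) (hC : ∀ w, |g w| ≤ C) :
    sInt (∑ n : Fin N, c n • (Measure.dirac (a n)).toSignedMeasure) g
      = ∑ n : Fin N, c n * g (a n) := by
  haveI h1 := isFiniteMeasure_finset_sum (ι := Fin N) Finset.univ
      (fun n => (Real.toNNReal (c n)) • Measure.dirac (a n))
  haveI h2 := isFiniteMeasure_finset_sum (ι := Fin N) Finset.univ
      (fun n => (Real.toNNReal (-c n)) • Measure.dirac (a n))
  have heq : (∑ n : Fin N, c n • (Measure.dirac (a n)).toSignedMeasure)
      = (∑ n : Fin N, (Real.toNNReal (c n)) • Measure.dirac (a n)).toSignedMeasure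
        - (∑ n : Fin N, (Real.toNNReal (-c n)) • Measure.dirac (a n)).toSignedMeasure := by
    ext s hs
    rw [VectorMeasure.sub_apply, Measure.toSignedMeasure_apply_measurable hs,
      Measure.toSignedMeasure_apply_measurable hs, vm_finset_sum_apply,
      measureReal_def, measureReal_def, Measure.finset_sum_apply, Measure.finset_sum_apply,
      ENNReal.toReal_sum (fun n _ => by finiteness),
      ENNReal.toReal_sum (fun n _ => by finiteness), ← Finset.sum_sub_distrib]
    refine Finset.sum_congr rfl fun n _ => ?_
    rw [VectorMeasure.smul_apply, Measure.toSignedMeasure_apply_measurable hs, measureReal_def,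
      Measure.smul_apply, Measure.smul_apply, ENNReal.toReal_smul, ENNReal.toReal_smul,
      NNReal.smul_def, NNReal.smul_def, Real.coe_toNNReal', Real.coe_toNNReal',
      smul_eq_mul, smul_eq_mul, smul_eq_mul]
    rcases le_total 0 (c n) with h | h
    · rw [max_eq_left h, max_eq_right (by linarith), zero_mul, sub_zero]
    · rw [max_eq_right h, max_eq_left (by linarith), zero_mul, zero_sub]; ring
  rw [sInt_eq_of_eq_sub _ _ _ heq hg C hC,
    integral_finset_sum_measure (fun n _ => integrable_of_bounded_meas hg C hC _),
    integral_finset_sum_measure (fun n _ => integrable_of_bounded_meas hg C hC _),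
    ← Finset.sum_sub_distrib]
  refine Finset.sum_congr rfl fun n _ => ?_
  rw [integral_smul_nnreal_measure, integral_smul_nnreal_measure, integral_dirac,
    NNReal.smul_def, NNReal.smul_def, Real.coe_toNNReal', Real.coe_toNNReal',
    smul_eq_mul, smul_eq_mul]
  rcases le_total 0 (c n) with h | h
  · rw [max_eq_left h, max_eq_right (by linarith), zero_mul, sub_zero]
  · rw [max_eq_right h, max_eq_left (by linarith), zero_mul, zero_sub]; ring

lemma diamSet_bddAbove {d : ℕ} {Ω : Set (Pd d)} (hΩ : IsCompact Ω) {S : Set (Pd d)}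
    (hS : S ⊆ Ω) :
    BddAbove {r : ℝ | ∃ p ∈ S, ∃ q ∈ S, r = ‖p.1 - q.1‖ + |p.2 - q.2|} := by
  obtain ⟨C, hC⟩ := isBounded_iff_forall_norm_le.mp hΩ.isBounded
  refine ⟨4 * C, ?_⟩
  rintro r ⟨p, hp, q, hq, rfl⟩
  have hp' := hC _ (hS hp)
  have hq' := hC _ (hS hq)
  have h1 : ‖p.1 - q.1‖ ≤ ‖p.1‖ + ‖q.1‖ := norm_sub_le _ _
  have h2 : |p.2 - q.2| ≤ |p.2| + |q.2| := abs_sub _ _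
  have h3 : ‖p.1‖ ≤ ‖p‖ := norm_fst_le p
  have h4 : ‖q.1‖ ≤ ‖q‖ := norm_fst_le q
  have h5 : |p.2| ≤ ‖p‖ := by simpa [Real.norm_eq_abs] using norm_snd_le p
  have h6 : |q.2| ≤ ‖q‖ := by simpa [Real.norm_eq_abs] using norm_snd_le q
  linarith

end Aux

open Aux in
/-- For a Borel partition {Ω_n}_{n=1}^N of Ω with points ω_n ∈ Ω_n and the
discretization μ_N = Σ_n μ†(Ω_n) δ_{ω_n}, one has
‖Kμ_N − Kμ†‖²_{L²(ρ)} ≤ ‖μ†‖²_{M(Ω)} · (max_n diam(Ω_n))² · Lip(σ)² · ∫ max(1,‖x‖)² dρ. -/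
theorem discretization_error_bound
    {d : ℕ} (Ω : Set (Pd d)) (hΩ : IsCompact Ω)
    (ρ : Measure (Ed d)) [IsProbabilityMeasure ρ]
    (hρ2 : Integrable (fun x : Ed d => ‖x‖ ^ 2) ρ)
    (σ : ℝ → ℝ) (Lσ : NNReal) (hσ : LipschitzWith Lσ σ)
    (N : ℕ) (P : Fin N → Set ↥Ω)
    (hPmeas : ∀ n, MeasurableSet (P n))
    (hPdisj : ∀ n m : Fin N, n ≠ m → Disjoint (P n) (P m))
    (hPcover : (⋃ n, P n) = Set.univ)
    (ω : Fin N → ↥Ω) (hω : ∀ n, ω n ∈ P n)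
    (μdag : SignedMeasure ↥Ω) :
    L2sq ρ (fun x =>
        Kop σ (∑ n : Fin N, μdag (P n) • (Measure.dirac (ω n)).toSignedMeasure) x -
          Kop σ μdag x) ≤
      tvNorm μdag ^ 2 * (⨆ n : Fin N, diam1 (Subtype.val '' P n)) ^ 2 * (Lσ : ℝ) ^ 2 *
        ∫ x, max 1 ‖x‖ ^ 2 ∂ρ := by
  simp only [L2sq, Kop]
  classical
  haveI : CompactSpace ↥Ω := isCompact_iff_compactSpace.mp hΩ
  set μN := ∑ n : Fin N, μdag (P n) • (Measure.dirac (ω n)).toSignedMeasure with hμN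
  set pos := μdag.toJordanDecomposition.posPart with hpos
  set neg := μdag.toJordanDecomposition.negPart with hneg
  set D := ⨆ n : Fin N, diam1 (Subtype.val '' P n) with hD
  have hPdisj' : Pairwise (Function.onFun Disjoint P) := fun n m hnm => hPdisj n m hnm
  -- diameter facts
  have hDn : ∀ n : Fin N, ∀ w ∈ P n,
      ‖((ω n : ↥Ω) : Pd d).1 - ((w : ↥Ω) : Pd d).1‖ +
        |((ω n : ↥Ω) : Pd d).2 - ((w : ↥Ω) : Pd d).2| ≤ D := by
    intro n w hw
    have hsub : Subtype.val '' P n ⊆ Ω := Subtype.coe_image_subset Ω (P n)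
    have hbd := diamSet_bddAbove hΩ hsub
    have h1 : ‖((ω n : ↥Ω) : Pd d).1 - ((w : ↥Ω) : Pd d).1‖ +
        |((ω n : ↥Ω) : Pd d).2 - ((w : ↥Ω) : Pd d).2| ≤ diam1 (Subtype.val '' P n) :=
      le_csSup hbd ⟨_, ⟨ω n, hω n, rfl⟩, _, ⟨w, hw, rfl⟩, rfl⟩
    exact h1.trans (le_ciSup (f := fun n : Fin N => diam1 (Subtype.val '' P n))
      (Set.Finite.bddAbove (Set.finite_range _)) n)
  have hD0 : 0 ≤ D :=
    Real.iSup_nonneg fun n =>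
      le_csSup (diamSet_bddAbove hΩ (Subtype.coe_image_subset Ω (P n)))
        ⟨_, ⟨ω n, hω n, rfl⟩, _, ⟨ω n, hω n, rfl⟩, by simp⟩
  -- pointwise bound
  have hmain : ∀ x : Ed d,
      |sInt μN (fun w : ↥Ω => σ (⟪(w : Pd d).1, x⟫ + (w : Pd d).2)) -
        sInt μdag (fun w : ↥Ω => σ (⟪(w : Pd d).1, x⟫ + (w : Pd d).2))|
      ≤ tvNorm μdag * D * (Lσ : ℝ) * max 1 ‖x‖ := by
    intro x
    set f : ↥Ω → ℝ := fun w => σ (⟪(w : Pd d).1, x⟫ + (w : Pd d).2) with hf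
    have hfc : Continuous f := by
      apply hσ.continuous.comp
      exact ((continuous_fst.comp continuous_subtype_val).inner continuous_const).add
        (continuous_snd.comp continuous_subtype_val)
    obtain ⟨C, hC⟩ := isCompact_univ.exists_bound_of_continuousOn hfc.continuousOn
    have hCb : ∀ w, |f w| ≤ C := fun w => by
      simpa [Real.norm_eq_abs] using hC w (Set.mem_univ w)
    have hgm : Measurable f := hfc.measurable
    have hint : Integrable f pos := integrable_of_bounded_meas hgm C hCb pos
    have hint' : Integrable f neg := integrable_of_bounded_meas hgm C hCb neg
    have hKN : sInt μN f = ∑ n : Fin N, μdag (P n) * f (ω n) :=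
      sInt_discrete _ _ hgm C hCb
    have hKdag : sInt μdag f = (∫ w, f w ∂pos) - ∫ w, f w ∂neg := rfl
    have hsum_pos : ∫ w, f w ∂pos = ∑ n : Fin N, ∫ w in P n, f w ∂pos := by
      rw [← setIntegral_univ, ← hPcover,
        integral_iUnion_fintype hPmeas hPdisj' (fun n => hint.integrableOn)]
    have hsum_neg : ∫ w, f w ∂neg = ∑ n : Fin N, ∫ w in P n, f w ∂neg := by
      rw [← setIntegral_univ, ← hPcover,
        integral_iUnion_fintype hPmeas hPdisj' (fun n => hint'.integrableOn)]
    have hpiece : ∀ n : Fin N, ∀ w ∈ P n, |f (ω n) - f w| ≤ (Lσ : ℝ) * D * max 1 ‖x‖ := by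
      intro n w hw
      have hlip := hσ.dist_le_mul (⟪((ω n : ↥Ω) : Pd d).1, x⟫ + ((ω n : ↥Ω) : Pd d).2)
        (⟪(w : Pd d).1, x⟫ + (w : Pd d).2)
      rw [Real.dist_eq, Real.dist_eq] at hlip
      set a1 := ((ω n : ↥Ω) : Pd d).1; set b1 := ((ω n : ↥Ω) : Pd d).2
      set a2 := (w : Pd d).1; set b2 := (w : Pd d).2
      have harr : (⟪a1, x⟫ + b1) - (⟪a2, x⟫ + b2) = ⟪a1 - a2, x⟫ + (b1 - b2) := by
        rw [inner_sub_left]; ring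
      have hib : |⟪a1 - a2, x⟫ + (b1 - b2)| ≤ ‖a1 - a2‖ * ‖x‖ + |b1 - b2| := by
        refine (abs_add_le _ _).trans ?_
        have := abs_real_inner_le_norm (a1 - a2) x
        linarith
      have hx1 : (1:ℝ) ≤ max 1 ‖x‖ := le_max_left _ _
      have hx2 : ‖x‖ ≤ max 1 ‖x‖ := le_max_right _ _
      have hdn := hDn n w hw
      have hL0 : (0:ℝ) ≤ (Lσ : ℝ) := Lσ.coe_nonneg
      have hn1 : (0:ℝ) ≤ ‖a1 - a2‖ := norm_nonneg _
      have hn2 : (0:ℝ) ≤ |b1 - b2| := abs_nonneg _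
      have key : |f (ω n) - f w| ≤ (Lσ : ℝ) * (‖a1 - a2‖ * ‖x‖ + |b1 - b2|) := by
        calc |f (ω n) - f w| ≤ (Lσ : ℝ) * |(⟪a1, x⟫ + b1) - (⟪a2, x⟫ + b2)| := hlip
          _ ≤ (Lσ : ℝ) * (‖a1 - a2‖ * ‖x‖ + |b1 - b2|) := by
              rw [harr]; exact mul_le_mul_of_nonneg_left hib hL0
      refine key.trans ?_
      have hx0 : (0:ℝ) ≤ max 1 ‖x‖ := le_trans zero_le_one hx1
      have hstep : ‖a1 - a2‖ * ‖x‖ + |b1 - b2| ≤ (‖a1 - a2‖ + |b1 - b2|) * max 1 ‖x‖ := by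
        nlinarith
      calc (Lσ : ℝ) * (‖a1 - a2‖ * ‖x‖ + |b1 - b2|)
          ≤ (Lσ : ℝ) * ((‖a1 - a2‖ + |b1 - b2|) * max 1 ‖x‖) :=
            mul_le_mul_of_nonneg_left hstep hL0
        _ ≤ (Lσ : ℝ) * (D * max 1 ‖x‖) :=
            mul_le_mul_of_nonneg_left (mul_le_mul_of_nonneg_right hdn hx0) hL0
        _ = (Lσ : ℝ) * D * max 1 ‖x‖ := by ring
    have happ : ∀ n : Fin N, μdag (P n) = (pos (P n)).toReal - (neg (P n)).toReal :=
      fun n => jordan_apply μdag (hPmeas n)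
    have hterm : ∀ n : Fin N,
        |μdag (P n) * f (ω n) - ((∫ w in P n, f w ∂pos) - ∫ w in P n, f w ∂neg)|
        ≤ (Lσ : ℝ) * D * max 1 ‖x‖ * ((pos (P n)).toReal + (neg (P n)).toReal) := by
      intro n
      have hip : IntegrableOn (fun w => f (ω n) - f w) (P n) pos :=
        ((integrable_const (f (ω n))).sub hint).integrableOn
      have hin : IntegrableOn (fun w => f (ω n) - f w) (P n) neg :=
        ((integrable_const (f (ω n))).sub hint').integrableOn
      have habs_p : IntegrableOn (fun w => |f (ω n) - f w|) (P n) pos := hip.abs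
      have habs_n : IntegrableOn (fun w => |f (ω n) - f w|) (P n) neg := hin.abs
      have hexp : μdag (P n) * f (ω n) - ((∫ w in P n, f w ∂pos) - ∫ w in P n, f w ∂neg)
          = (∫ w in P n, (f (ω n) - f w) ∂pos) - ∫ w in P n, (f (ω n) - f w) ∂neg := by
        rw [integral_sub (integrable_const _).integrableOn hint.integrableOn,
          integral_sub (integrable_const _).integrableOn hint'.integrableOn,
          setIntegral_const, setIntegral_const, happ n, smul_eq_mul, smul_eq_mul,
          measureReal_def, measureReal_def]
        ring
      have hbp : |∫ w in P n, (f (ω n) - f w) ∂pos|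
          ≤ (Lσ : ℝ) * D * max 1 ‖x‖ * (pos (P n)).toReal := by
        calc |∫ w in P n, (f (ω n) - f w) ∂pos| ≤ ∫ w in P n, |f (ω n) - f w| ∂pos := by
              simpa [Real.norm_eq_abs] using
                norm_integral_le_integral_norm (μ := pos.restrict (P n))
                  (fun w => f (ω n) - f w)
          _ ≤ ∫ _w in P n, ((Lσ : ℝ) * D * max 1 ‖x‖) ∂pos :=
              setIntegral_mono_on habs_p (integrable_const _).integrableOn (hPmeas n)
                (fun w hw => hpiece n w hw)
          _ = (Lσ : ℝ) * D * max 1 ‖x‖ * (pos (P n)).toReal := by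
              rw [setIntegral_const, smul_eq_mul, measureReal_def]; ring
      have hbn : |∫ w in P n, (f (ω n) - f w) ∂neg|
          ≤ (Lσ : ℝ) * D * max 1 ‖x‖ * (neg (P n)).toReal := by
        calc |∫ w in P n, (f (ω n) - f w) ∂neg| ≤ ∫ w in P n, |f (ω n) - f w| ∂neg := by
              simpa [Real.norm_eq_abs] using
                norm_integral_le_integral_norm (μ := neg.restrict (P n))
                  (fun w => f (ω n) - f w)
          _ ≤ ∫ _w in P n, ((Lσ : ℝ) * D * max 1 ‖x‖) ∂neg :=
              setIntegral_mono_on habs_n (integrable_const _).integrableOn (hPmeas n)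
                (fun w hw => hpiece n w hw)
          _ = (Lσ : ℝ) * D * max 1 ‖x‖ * (neg (P n)).toReal := by
              rw [setIntegral_const, smul_eq_mul, measureReal_def]; ring
      rw [hexp]
      calc |(∫ w in P n, (f (ω n) - f w) ∂pos) - ∫ w in P n, (f (ω n) - f w) ∂neg|
          ≤ |∫ w in P n, (f (ω n) - f w) ∂pos| + |∫ w in P n, (f (ω n) - f w) ∂neg| :=
            abs_sub _ _
        _ ≤ (Lσ : ℝ) * D * max 1 ‖x‖ * ((pos (P n)).toReal + (neg (P n)).toReal) := by
            rw [mul_add]; exact add_le_add hbp hbn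
    have hsum_meas_pos : ∑ n : Fin N, (pos (P n)).toReal = (pos Set.univ).toReal := by
      rw [← hPcover, measure_iUnion hPdisj' hPmeas, tsum_fintype,
        ENNReal.toReal_sum (fun n _ => measure_ne_top _ _)]
    have hsum_meas_neg : ∑ n : Fin N, (neg (P n)).toReal = (neg Set.univ).toReal := by
      rw [← hPcover, measure_iUnion hPdisj' hPmeas, tsum_fintype,
        ENNReal.toReal_sum (fun n _ => measure_ne_top _ _)]
    have htv : tvNorm μdag = (pos Set.univ).toReal + (neg Set.univ).toReal := by
      unfold tvNorm SignedMeasure.totalVariation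
      rw [Measure.add_apply, ENNReal.toReal_add (measure_ne_top _ _) (measure_ne_top _ _)]
    calc |sInt μN f - sInt μdag f|
        = |∑ n : Fin N, (μdag (P n) * f (ω n) -
            ((∫ w in P n, f w ∂pos) - ∫ w in P n, f w ∂neg))| := by
          rw [hKN, hKdag, hsum_pos, hsum_neg, Finset.sum_sub_distrib, Finset.sum_sub_distrib]
      _ ≤ ∑ n : Fin N, |μdag (P n) * f (ω n) -
            ((∫ w in P n, f w ∂pos) - ∫ w in P n, f w ∂neg)| :=
          Finset.abs_sum_le_sum_abs _ _
      _ ≤ ∑ n : Fin N, (Lσ : ℝ) * D * max 1 ‖x‖ *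
            ((pos (P n)).toReal + (neg (P n)).toReal) :=
          Finset.sum_le_sum fun n _ => hterm n
      _ = (Lσ : ℝ) * D * max 1 ‖x‖ *
            ((pos Set.univ).toReal + (neg Set.univ).toReal) := by
          rw [← Finset.mul_sum, Finset.sum_add_distrib, hsum_meas_pos, hsum_meas_neg]
      _ = tvNorm μdag * D * (Lσ : ℝ) * max 1 ‖x‖ := by rw [htv]; ring
  -- integration
  have hB : Integrable (fun x : Ed d => (max 1 ‖x‖) ^ 2) ρ := by
    refine ((integrable_const (1:ℝ)).add hρ2).mono'
      ((continuous_const.max continuous_norm).pow 2).aestronglyMeasurable ?_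
    filter_upwards with x
    rw [Real.norm_eq_abs, abs_of_nonneg (by positivity)]
    simp only [Pi.add_apply]
    rcases le_total ‖x‖ 1 with h | h
    · rw [max_eq_left h]; nlinarith [norm_nonneg x, sq_nonneg ‖x‖]
    · rw [max_eq_right h]; nlinarith [norm_nonneg x]
  have final : (∫ x, (sInt μN (fun w : ↥Ω => σ (⟪(w : Pd d).1, x⟫ + (w : Pd d).2)) -
        sInt μdag (fun w : ↥Ω => σ (⟪(w : Pd d).1, x⟫ + (w : Pd d).2))) ^ 2 ∂ρ)
      ≤ ∫ x, (tvNorm μdag * D * (Lσ : ℝ) * max 1 ‖x‖) ^ 2 ∂ρ := by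
    refine integral_mono_of_nonneg (Filter.Eventually.of_forall fun x => sq_nonneg _)
      ?_ (Filter.Eventually.of_forall fun x => ?_)
    · have := hB.const_mul ((tvNorm μdag * D * (Lσ : ℝ)) ^ 2)
      refine this.congr ?_  -- rewrite shape
      filter_upwards with x
      ring
    · have h := hmain x
      dsimp only
      rw [← sq_abs]
      exact pow_le_pow_left₀ (abs_nonneg _) h 2
  refine final.trans_eq ?_
  have : ∀ x : Ed d, (tvNorm μdag * D * (Lσ : ℝ) * max 1 ‖x‖) ^ 2
      = tvNorm μdag ^ 2 * D ^ 2 * (Lσ : ℝ) ^ 2 * (max 1 ‖x‖) ^ 2 := fun x => by ring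
  simp_rw [this]
  rw [integral_const_mul]


end
end
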